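/- If x = [\overline{a_0,...,a_n}] is the value of a purely periodic continued fraction with all a_i ≥ 1, then x > 1 and x satisfies a quadratic equation q x^2 + (s - p) x - r = 0 with integer coefficients, where p/q = [a_0,...,a_n] and r/s = [a_0,...,a_{n-1}] in lowest terms; in particular x is irrational provided (p-s)^2 + 4rq is not a perfect square. -/

import Mathlib

def cf : List ℚ → ℚ
  | [] => 0
  | [a] => a
  | a :: b :: l => a + 1 / cf (b :: l)

lemma cf_ge_one : ∀ l : List ℚ, l ≠ [] → (∀ a ∈ l, 1 ≤ a) → 1 ≤ cf l := by
  intro l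
  induction l with
  | nil => simp
  | cons a t ih =>
    intro _ h
    cases t with
    | nil => simpa [cf] using h a (by simp)
    | cons b t' =>
      have h1 : 1 ≤ cf (b :: t') := ih (by simp) (fun x hx => h x (by simp [hx]))
      have ha : 1 ≤ a := h a (by simp)
      have : 0 < 1 / cf (b :: t') := by positivity
      simp only [cf]
      linarith

lemma cf_gt_one (a b : ℚ) (t : List ℚ) (h : ∀ x ∈ a :: b :: t, 1 ≤ x) :
    1 < cf (a :: b :: t) := by
  have h1 : 1 ≤ cf (b :: t) := cf_ge_one _ (by simp) (fun x hx => h x (by simp [hx]))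
  have ha : 1 ≤ a := h a (by simp)
  have : 0 < 1 / cf (b :: t) := by positivity
  simp only [cf]
  linarith

lemma map_cast_eq (m : List ℕ) : (m.map (fun a => (a : ℚ))) = List.map Nat.cast m := by
  induction m with
  | nil => rfl
  | cons a t ih => simp_all [List.map_cons]

lemma isSquare_of_rat_sq (D : ℤ) (y : ℚ) (h : y ^ 2 = (D : ℚ)) : IsSquare D := by
  have hden : (y ^ 2).den = 1 := by rw [h]; exact Rat.den_intCast D
  rw [Rat.den_pow] at hden
  have hd1 : y.den = 1 := by nlinarith [y.pos]
  have hy : (y.num : ℚ) = y := by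
    rw [← Rat.num_div_den y, hd1]; simp
  refine ⟨y.num, ?_⟩
  have : ((y.num * y.num : ℤ) : ℚ) = (D : ℚ) := by push_cast; rw [hy]; linarith [sq y]
  exact_mod_cast this.symm

/-- If x = [\overline{a₀,…,aₙ}] (all aᵢ ≥ 1), i.e. x > 0 and x = (px+r)/(qx+s)
where p/q = [a₀,…,aₙ] and r/s = [a₀,…,a_{n-1}] in lowest terms, then x > 1 and
qx² + (s-p)x - r = 0; if (p-s)² + 4rq is not a perfect square then x is irrational. -/
theorem stmt_17 (l : List ℕ) (hlen : 2 ≤ l.length) (hpos : ∀ a ∈ l, 1 ≤ a)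
    (p q r s : ℤ) (hp : 0 < p) (hq : 0 < q) (hr : 0 < r) (hs : 0 < s)
    (hpq : IsCoprime p q) (hrs : IsCoprime r s)
    (h1 : (p : ℚ) / q = cf (l.map (fun a => (a : ℚ))))
    (h2 : (r : ℚ) / s = cf (l.dropLast.map (fun a => (a : ℚ))))
    (x : ℝ) (hx : 0 < x) (hfix : x = ((p : ℝ) * x + r) / ((q : ℝ) * x + s)) :
    1 < x ∧ (q : ℝ) * x ^ 2 + ((s : ℝ) - p) * x - r = 0 ∧
      (¬ IsSquare ((p - s) ^ 2 + 4 * r * q) → Irrational x) := by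
  -- normalize the weirdly-elaborated maps
  rw [map_cast_eq] at h1 h2
  -- p > q
  have hmem : ∀ y ∈ List.map (Nat.cast : ℕ → ℚ) l, 1 ≤ y := by
    intro y hy
    obtain ⟨z, hz, rfl⟩ := List.mem_map.1 hy
    exact_mod_cast hpos z hz
  have hpq1 : 1 < (p : ℚ) / q := by
    rw [h1]
    have hlen' : 2 ≤ (List.map (Nat.cast : ℕ → ℚ) l).length := by
      rw [List.length_map]; exact hlen
    match hm : List.map (Nat.cast : ℕ → ℚ) l, hlen', hmem with
    | a :: b :: t, _, hmem' => exact cf_gt_one _ _ _ hmem'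
  have hpgtq : q < p := by
    have hq' : (0 : ℚ) < q := by exact_mod_cast hq
    rw [lt_div_iff₀ hq', one_mul] at hpq1
    exact_mod_cast hpq1
  -- r ≥ s
  have hne : l.dropLast ≠ [] := by
    have hl : l.dropLast.length = l.length - 1 := List.length_dropLast
    intro h; rw [h] at hl; simp at hl; omega
  have hrs1 : 1 ≤ (r : ℚ) / s := by
    rw [h2]
    apply cf_ge_one
    · intro h
      exact hne (List.map_eq_nil_iff.mp h)
    · intro y hy
      obtain ⟨z, hz, rfl⟩ := List.mem_map.1 hy
      exact_mod_cast hpos z (List.mem_of_mem_dropLast hz)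
  have hrges : s ≤ r := by
    have hs' : (0 : ℚ) < s := by exact_mod_cast hs
    rw [le_div_iff₀ hs', one_mul] at hrs1
    exact_mod_cast hrs1
  -- casts
  have hqR : (0 : ℝ) < q := by exact_mod_cast hq
  have hsR : (0 : ℝ) < s := by exact_mod_cast hs
  have hrR : (0 : ℝ) < r := by exact_mod_cast hr
  have hpR : (q : ℝ) < p := by exact_mod_cast hpgtq
  have hsrR : (s : ℝ) ≤ r := by exact_mod_cast hrges
  have hden : (0 : ℝ) < (q : ℝ) * x + s := by positivity
  rw [eq_div_iff hden.ne'] at hfix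
  have hQ : (q : ℝ) * x ^ 2 + ((s : ℝ) - p) * x - r = 0 := by linear_combination hfix
  have hx1 : 1 < x := by
    by_contra h
    push_neg at h
    nlinarith [mul_nonneg (mul_nonneg hqR.le hx.le) (sub_nonneg.2 h)]
  refine ⟨hx1, hQ, ?_⟩
  intro hD
  rw [Irrational]
  rintro ⟨t, ht⟩
  apply hD
  have hQt : (q : ℚ) * t ^ 2 + ((s : ℚ) - p) * t - r = 0 := by
    have : ((q : ℚ) * t ^ 2 + ((s : ℚ) - p) * t - r : ℝ) = 0 := by push_cast [ht]; exact hQ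
    exact_mod_cast this
  refine isSquare_of_rat_sq _ (2 * q * t + (s - p)) ?_
  push_cast
  linear_combination (4 * (q : ℚ)) * hQt
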